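/- Suppose C ⊆ Pr(𝕋) is minimal with respect to the properties of being nonempty, weak*-compact, convex, and ˆ-closed, ⪯ is a linear quasi-order on 𝕋 such that s ≺ sˆt and t ≺ sˆt for all s,t ∈ 𝕋, and let I = {s ∈ 𝕋 : for every μ ∈ C, μ({t ∈ 𝕋 : s ≺ t}) = 1}. If μ(I) = 1 for every μ ∈ C, then for every μ ∈ C, every s ∈ I, and every finite binary sequence σ, μ({t ∈ 𝕋 : t/σ is defined, t/σ ∈ I, and s ≺ t/σ}) = 1. -/

import Mathlib

open scoped Classical

/-- The free binary system (free magma) on one generator. -/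
abbrev 𝕋 : Type := FreeMagma Unit

/-- The generator `1` of `𝕋`. -/
def e1 : 𝕋 := FreeMagma.of ()

/-- `#(t)`: the number of occurrences of the generator in `t`. -/
def cnt : 𝕋 → ℕ
  | FreeMagma.of _ => 1
  | FreeMagma.mul a b => cnt a + cnt b

/-- The space `ℓ^∞(S)` of bounded real-valued functions on `S`. -/
def Bdd (S : Type*) : Type _ := {f : S → ℝ // ∃ M, ∀ s, |f s| ≤ M}

/-- Package a function as an element of `Bdd S` (junk value if unbounded). -/
noncomputable def liftBdd {S : Type*} (g : S → ℝ) : Bdd S :=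
  if h : ∃ M, ∀ s, |g s| ≤ M then ⟨g, h⟩ else ⟨fun _ => 0, 0, fun _ => by simp⟩

/-- The constant function as an element of `Bdd S`. -/
def constB (S : Type*) (c : ℝ) : Bdd S := ⟨fun _ => c, |c|, fun _ => le_rfl⟩

/-- The characteristic function of `E` as an element of `Bdd S`. -/
noncomputable def indB {S : Type*} (E : Set S) : Bdd S :=
  liftBdd (fun s => if s ∈ E then 1 else 0)

/-- `Pr S`: finitely additive probability measures on `S`, identified with the
positive normalized linear functionals on `ℓ^∞(S)`.  The weak* topology is the
subspace topology inherited from the product topology on `Bdd S → ℝ`. -/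
def PrSet (S : Type*) : Set (Bdd S → ℝ) :=
  {φ | (∀ f g h : Bdd S, (∀ s, h.1 s = f.1 s + g.1 s) → φ h = φ f + φ g) ∧
       (∀ (c : ℝ) (f g : Bdd S), (∀ s, g.1 s = c * f.1 s) → φ g = c * φ f) ∧
       (∀ f : Bdd S, (∀ s, 0 ≤ f.1 s) → 0 ≤ φ f) ∧
       φ (constB S 1) = 1}

/-- `μ(E)`: the measure of a set `E ⊆ S`. -/
noncomputable def mE {S : Type*} (φ : Bdd S → ℝ) (E : Set S) : ℝ := φ (indB E)

/-- The product `μ ⊗ ν` of finitely additive measures: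
`μ⊗ν(f) = μ(x ↦ ν(y ↦ f(x,y)))`. -/
noncomputable def prodM {S T : Type*} (φ : Bdd S → ℝ) (ψ : Bdd T → ℝ) :
    Bdd (S × T) → ℝ :=
  fun f => φ (liftBdd fun x => ψ (liftBdd fun y => f.1 (x, y)))

/-- The extension of a binary operation `op` on `S` to `Pr S`:
`μ⋆ν(f) = μ(x ↦ ν(y ↦ f(x ⋆ y)))`. -/
noncomputable def starM {S : Type*} (op : S → S → S) (φ ψ : Bdd S → ℝ) :
    Bdd S → ℝ :=
  fun f => φ (liftBdd fun x => ψ (liftBdd fun y => f.1 (op x y)))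

/-- The extension of `ˆ` to `Pr 𝕋`. -/
noncomputable def hmul (φ ψ : Bdd 𝕋 → ℝ) : Bdd 𝕋 → ℝ := starM (· * ·) φ ψ

/-- Finitely supported probability measures: finite convex combinations of
point evaluations. -/
def FinSuppPr (S : Type*) : Set (Bdd S → ℝ) :=
  {φ | ∃ (F : Finset S) (w : S → ℝ), (∀ s ∈ F, 0 ≤ w s) ∧ (∑ s ∈ F, w s) = 1 ∧
      ∀ f : Bdd S, φ f = ∑ s ∈ F, w s * f.1 s}

/-- `𝔸_n`: finitely supported probability measures concentrated on `𝕋_n`. -/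
def Asets (n : ℕ) : Set (Bdd 𝕋 → ℝ) :=
  {φ | ∃ (F : Finset 𝕋) (w : 𝕋 → ℝ), (∀ t ∈ F, cnt t = n) ∧ (∀ t ∈ F, 0 ≤ w t) ∧
      (∑ t ∈ F, w t) = 1 ∧ ∀ f : Bdd 𝕋, φ f = ∑ t ∈ F, w t * f.1 t}

/-- The extension of `+` on `ℕ` to ultrafilters: `A ∈ U+V` iff
`{m : {n : m+n ∈ A} ∈ V} ∈ U`. -/
noncomputable def addU (U V : Ultrafilter ℕ) : Ultrafilter ℕ :=
  U.bind fun m => V.map fun n => m + n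

/-- `𝔸_U`: the `U`-limit of the sets `𝔸_m`. -/
def AU (U : Ultrafilter ℕ) : Set (Bdd 𝕋 → ℝ) :=
  {μ | μ ∈ PrSet 𝕋 ∧ ∀ W : Set (Bdd 𝕋 → ℝ), IsOpen W → μ ∈ W →
      {m : ℕ | (W ∩ Asets m).Nonempty} ∈ U}

/-- The extension of `ˆ` to ultrafilters on `𝕋`: `E ∈ UˆV` iff
`{u : {v : uˆv ∈ E} ∈ V} ∈ U`. -/
noncomputable def umul (U V : Ultrafilter 𝕋) : Ultrafilter 𝕋 :=
  U.bind fun u => V.map fun v => u * v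

/-- Substitution of measures into a term `t`:
`t(μ_0,…,μ_{m-1})(f)` is the nested integral
`μ_0(x_0 ↦ ⋯ μ_{m-1}(x_{m-1} ↦ f(t(x⃗)))⋯)`. -/
noncomputable def substM : 𝕋 → List (Bdd 𝕋 → ℝ) → (Bdd 𝕋 → ℝ)
  | FreeMagma.of _, μs => μs.headI
  | FreeMagma.mul a b, μs =>
      hmul (substM a (μs.take (cnt a))) (substM b (μs.drop (cnt a)))

/-- `t_k`: iteratively remove the carets of `t` involving only leaves of index
greater than `k`. -/
def tk : 𝕋 → ℕ → 𝕋
  | FreeMagma.of _, _ => e1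
  | FreeMagma.mul a b, k => if k < cnt a then tk a k * e1 else a * tk b (k - cnt a)

/-- `l_k(t) = #(t_k) - 2` (truncated subtraction). -/
def lk (t : 𝕋) (k : ℕ) : ℕ := cnt (tk t k) - 2

/-- The subterm `t/σ` of `t` at address `σ` (`false` = left/`0`, `true` = right/`1`). -/
def subT : 𝕋 → List Bool → Option 𝕋
  | t, [] => some t
  | FreeMagma.of _, _ :: _ => none
  | FreeMagma.mul a b, c :: σ => if c then subT b σ else subT a σ

/-- `σ <_lex ς` for incompatible binary sequences: at the first coordinate where
they differ, `σ` has `0` and `ς` has `1`. -/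
def lexLT (σ ς : List Bool) : Prop :=
  ∃ p σ' ς', σ = p ++ (false :: σ') ∧ ς = p ++ (true :: ς')

/-- `x₀·E`. -/
def x0E (E : Set 𝕋) : Set 𝕋 :=
  {x | ∃ a b c : 𝕋, x = a * (b * c) ∧ (a * b) * c ∈ E}

/-- `x₁·E`. -/
def x1E (E : Set 𝕋) : Set 𝕋 :=
  {x | ∃ s a b c : 𝕋, x = s * (a * (b * c)) ∧ s * ((a * b) * c) ∈ E}

/-- `u_σ` for a nonempty finite binary sequence `σ`. -/
def uSeq : List Bool → 𝕋
  | [] => e1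
  | [_] => e1
  | b :: σ => if b then e1 * uSeq σ else uSeq σ * e1

/-- `a ≪ b`: for some `p`, `#(a) < 2^p` and `2^p` divides `#(b)`. -/
def ll (a b : 𝕋) : Prop := ∃ p : ℕ, cnt a < 2 ^ p ∧ 2 ^ p ∣ cnt b

/-- `r↾n`: the first `n` values of `r` as a finite binary sequence. -/
def rList (r : ℕ → Bool) (n : ℕ) : List Bool := (List.range n).map r

/-- The map `h_r : 𝕋 → 𝕋`. -/
noncomputable def hr (r : ℕ → Bool) : 𝕋 → 𝕋
  | FreeMagma.of _ => uSeq (rList r 1)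
  | FreeMagma.mul a b =>
      if ll a b then hr r a * hr r b else uSeq (rList r (cnt a + cnt b))

/-- The action of `h_r` on measures: `h_r(μ)(f) = μ(f ∘ h_r)`. -/
noncomputable def hrM (r : ℕ → Bool) (φ : Bdd 𝕋 → ℝ) : Bdd 𝕋 → ℝ :=
  fun f => φ (liftBdd fun t => f.1 (hr r t))

/-- `lev`: `l(1) = 0`, `l(aˆb) = l(a) + 1`. -/
def lev : 𝕋 → ℕ
  | FreeMagma.of _ => 0
  | FreeMagma.mul a _ => lev a + 1

/-- `C` is closed under `ˆ`. -/
def HClosed (C : Set (Bdd 𝕋 → ℝ)) : Prop := ∀ μ ∈ C, ∀ ν ∈ C, hmul μ ν ∈ C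
section AuxLemmas

lemma liftBdd_eval {S : Type*} {g : S → ℝ} (h : ∃ M, ∀ s, |g s| ≤ M) :
    (liftBdd g).1 = g := by
  unfold liftBdd; exact congrArg Subtype.val (dif_pos h)

lemma ind_bdd {S : Type*} (E : Set S) :
    ∃ M, ∀ s, |(fun s => if s ∈ E then (1:ℝ) else 0) s| ≤ M :=
  ⟨1, fun s => by by_cases h : s ∈ E <;> simp [h]⟩

lemma indB_eval {S : Type*} (E : Set S) :
    (indB E).1 = fun s => if s ∈ E then (1:ℝ) else 0 :=
  liftBdd_eval (ind_bdd E)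

lemma liftBdd_coe {S : Type*} (f : Bdd S) : liftBdd f.1 = f :=
  Subtype.ext (liftBdd_eval f.2)

lemma pr_const {S : Type*} {φ : Bdd S → ℝ} (hφ : φ ∈ PrSet S)
    {g : Bdd S} {c : ℝ} (hg : ∀ s, g.1 s = c) : φ g = c := by
  have h := hφ.2.1 c (constB S 1) g (fun s => by simp [constB, hg s])
  rw [h, hφ.2.2.2, mul_one]

lemma pr_add {S : Type*} {φ : Bdd S → ℝ} (hφ : φ ∈ PrSet S)
    {f g h : Bdd S} (hfg : ∀ s, h.1 s = f.1 s + g.1 s) :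
    φ h = φ f + φ g := hφ.1 f g h hfg

lemma pr_mono {S : Type*} {φ : Bdd S → ℝ} (hφ : φ ∈ PrSet S)
    {f g : Bdd S} (h : ∀ s, f.1 s ≤ g.1 s) : φ f ≤ φ g := by
  obtain ⟨Mf, hMf⟩ := f.2
  obtain ⟨Mg, hMg⟩ := g.2
  have hb : ∃ M, ∀ s, |g.1 s - f.1 s| ≤ M := by
    refine ⟨Mg + Mf, fun s => ?_⟩
    rw [sub_eq_add_neg]
    exact (abs_add_le _ _).trans (add_le_add (hMg s) (by rw [abs_neg]; exact hMf s))
  have hd : (liftBdd (fun s => g.1 s - f.1 s)).1 = fun s => g.1 s - f.1 s :=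
    liftBdd_eval hb
  have h1 : φ g = φ f + φ (liftBdd (fun s => g.1 s - f.1 s)) :=
    pr_add hφ (fun s => by simp only [hd]; ring)
  have h2 : 0 ≤ φ (liftBdd (fun s => g.1 s - f.1 s)) := by
    refine hφ.2.2.1 _ (fun s => ?_)
    simp only [hd]
    exact sub_nonneg.mpr (h s)
  linarith

lemma mE_le_one {S : Type*} {φ : Bdd S → ℝ} (hφ : φ ∈ PrSet S) (E : Set S) :
    mE φ E ≤ 1 := by
  have := pr_mono hφ (f := indB E) (g := constB S 1) (fun s => by
    simp only [indB_eval, constB]; split_ifs <;> norm_num)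
  simpa [mE, hφ.2.2.2] using this

lemma mE_inter {S : Type*} {φ : Bdd S → ℝ} (hφ : φ ∈ PrSet S)
    {A B : Set S} (hA : mE φ A = 1) (hB : mE φ B = 1) : mE φ (A ∩ B) = 1 := by
  have hub := mE_le_one hφ (A ∩ B)
  have hbk : ∃ M, ∀ s, |(fun s => (if s ∈ B then (1:ℝ) else 0) - 1) s| ≤ M :=
    ⟨2, fun s => by by_cases h : s ∈ B <;> simp [h] <;> norm_num⟩
  have hk1 : (liftBdd (fun s => (if s ∈ B then (1:ℝ) else 0) - 1)).1 =
      fun s => (if s ∈ B then (1:ℝ) else 0) - 1 := liftBdd_eval hbk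
  have hk0 : φ (liftBdd (fun s => (if s ∈ B then (1:ℝ) else 0) - 1)) = 0 := by
    have h1 : φ (indB B) = φ (liftBdd (fun s => (if s ∈ B then (1:ℝ) else 0) - 1))
        + φ (constB S 1) :=
      pr_add hφ (fun s => by simp only [hk1, indB_eval, constB]; ring)
    have h2 := hφ.2.2.2
    rw [mE] at hB
    linarith
  have hbg : ∃ M, ∀ s, |(fun s => (if s ∈ A then (1:ℝ) else 0) +
      ((if s ∈ B then (1:ℝ) else 0) - 1)) s| ≤ M := by
    refine ⟨3, fun s => ?_⟩
    by_cases h1 : s ∈ A <;> by_cases h2 : s ∈ B <;> simp [h1, h2] <;> norm_num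
  have hg1 : (liftBdd (fun s => (if s ∈ A then (1:ℝ) else 0) +
      ((if s ∈ B then (1:ℝ) else 0) - 1))).1 =
      fun s => (if s ∈ A then (1:ℝ) else 0) + ((if s ∈ B then (1:ℝ) else 0) - 1) :=
    liftBdd_eval hbg
  have hgv : φ (liftBdd (fun s => (if s ∈ A then (1:ℝ) else 0) +
      ((if s ∈ B then (1:ℝ) else 0) - 1))) = 1 := by
    have h1 := pr_add hφ (f := indB A)
      (g := liftBdd (fun s => (if s ∈ B then (1:ℝ) else 0) - 1))
      (h := liftBdd (fun s => (if s ∈ A then (1:ℝ) else 0) +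
        ((if s ∈ B then (1:ℝ) else 0) - 1)))
      (fun s => by simp only [hg1, hk1, indB_eval])
    rw [mE] at hA
    rw [h1, hA, hk0]; ring
  have hmono : φ (liftBdd (fun s => (if s ∈ A then (1:ℝ) else 0) +
      ((if s ∈ B then (1:ℝ) else 0) - 1))) ≤ φ (indB (A ∩ B)) := by
    refine pr_mono hφ (fun s => ?_)
    simp only [hg1, indB_eval, Set.mem_inter_iff]
    by_cases h1 : s ∈ A <;> by_cases h2 : s ∈ B <;> simp [h1, h2]
  rw [mE]
  rw [mE] at hub
  linarith

lemma subT_cons (a b : 𝕋) (c : Bool) (σ : List Bool) :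
    subT (a * b) (c :: σ) = if c then subT b σ else subT a σ := rfl

lemma hmul_cons {φ ψ : Bdd 𝕋 → ℝ} (hφ : φ ∈ PrSet 𝕋) (hψ : ψ ∈ PrSet 𝕋)
    (c : Bool) (σ : List Bool) (P : 𝕋 → Prop) :
    hmul φ ψ (indB {t : 𝕋 | ∃ u, subT t (c :: σ) = some u ∧ P u}) =
      mE (if c then ψ else φ) {t : 𝕋 | ∃ u, subT t σ = some u ∧ P u} := by
  set S' : Set 𝕋 := {t : 𝕋 | ∃ u, subT t (c :: σ) = some u ∧ P u} with hS'
  set E : Set 𝕋 := {t : 𝕋 | ∃ u, subT t σ = some u ∧ P u} with hE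
  have hmem : ∀ x y : 𝕋, (x * y ∈ S') ↔ ((if c then y else x) ∈ E) := by
    intro x y
    simp only [hS', hE, Set.mem_setOf_eq, subT_cons]
    cases c <;> simp
  show φ (liftBdd fun x => ψ (liftBdd fun y => (indB S').1 (x * y))) = _
  cases c
  · -- left
    have hin : ∀ x y : 𝕋, (indB S').1 (x * y) = (indB E).1 x := by
      intro x y
      rw [indB_eval, indB_eval]
      have h' : (x * y ∈ S') ↔ x ∈ E := (hmem x y).trans (by simp)
      simp only [h']
      by_cases hx : x ∈ E <;> simp [hx]
    have step1 : (fun x => ψ (liftBdd fun y => (indB S').1 (x * y))) = (indB E).1 := by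
      funext x
      have harg : (liftBdd fun y => (indB S').1 (x * y)) =
          liftBdd (fun _ : 𝕋 => (indB E).1 x) := by
        congr 1; funext y; exact hin x y
      rw [harg]
      exact pr_const hψ (fun s => by
        rw [liftBdd_eval ⟨|(indB E).1 x|, fun _ => le_rfl⟩])
    have harg2 : (liftBdd fun x => ψ (liftBdd fun y => (indB S').1 (x * y))) = indB E :=
      (congrArg liftBdd step1).trans (liftBdd_coe (indB E))
    rw [harg2]
    simp [mE]
  · -- right
    have hin : ∀ x y : 𝕋, (indB S').1 (x * y) = (indB E).1 y := by
      intro x y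
      rw [indB_eval, indB_eval]
      have h' : (x * y ∈ S') ↔ y ∈ E := (hmem x y).trans (by simp)
      simp only [h']
      by_cases hy : y ∈ E <;> simp [hy]
    have hcψ : ∀ x : 𝕋, ψ (liftBdd fun y => (indB S').1 (x * y)) = ψ (indB E) := by
      intro x
      congr 1
      exact (congrArg liftBdd (funext (hin x))).trans (liftBdd_coe (indB E))
    have hb : ∃ M, ∀ x : 𝕋, |(fun x => ψ (liftBdd fun y => (indB S').1 (x * y))) x| ≤ M :=
      ⟨|ψ (indB E)|, fun x => by simp only [hcψ x]; exact le_rfl⟩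
    have := pr_const hφ (g := liftBdd fun x => ψ (liftBdd fun y => (indB S').1 (x * y)))
      (c := ψ (indB E)) (fun s => by rw [liftBdd_eval hb]; exact hcψ s)
    rw [this]
    simp [mE]

end AuxLemmas

/-- Claim 5.6: with `C` minimal and
`I = {s : ∀ μ ∈ C, μ({t : s ≺ t}) = 1}`, if `μ(I) = 1` for all `μ ∈ C`, then
for every `μ ∈ C`, `s ∈ I`, and binary sequence `σ`,
`μ({t : t/σ is defined, t/σ ∈ I, s ≺ t/σ}) = 1`. -/
theorem subterm_in_I (C : Set (Bdd 𝕋 → ℝ)) (hC : C ⊆ PrSet 𝕋)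
    (hne : C.Nonempty) (hcomp : IsCompact C) (hconv : Convex ℝ C) (hcl : HClosed C)
    (hmin : ∀ D ⊆ C, D.Nonempty → IsCompact D → Convex ℝ D → HClosed D → D = C)
    (r : 𝕋 → 𝕋 → Prop)
    (hrefl : ∀ s, r s s)
    (htrans : ∀ a b c, r a b → r b c → r a c)
    (htotal : ∀ s t, r s t ∨ r t s)
    (hop : ∀ s t : 𝕋, (r s (s * t) ∧ ¬ r (s * t) s) ∧ (r t (s * t) ∧ ¬ r (s * t) t))
    (I : Set 𝕋)
    (hIdef : I = {s : 𝕋 | ∀ μ ∈ C, mE μ {t : 𝕋 | r s t ∧ ¬ r t s} = 1})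
    (hI1 : ∀ μ ∈ C, mE μ I = 1) :
    ∀ μ ∈ C, ∀ s ∈ I, ∀ σ : List Bool,
      mE μ {t : 𝕋 | ∃ u, subT t σ = some u ∧ u ∈ I ∧ (r s u ∧ ¬ r u s)} = 1 := by
  suffices H : ∀ σ : List Bool, ∀ μ ∈ C, ∀ s ∈ I,
      mE μ {t : 𝕋 | ∃ u, subT t σ = some u ∧ u ∈ I ∧ (r s u ∧ ¬ r u s)} = 1 by
    intro μ hμ s hs σ; exact H σ μ hμ s hs
  intro σ
  induction σ with
  | nil =>
    intro μ hμ s hs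
    have hseteq : {t : 𝕋 | ∃ u, subT t [] = some u ∧ u ∈ I ∧ (r s u ∧ ¬ r u s)} =
        I ∩ {t : 𝕋 | r s t ∧ ¬ r t s} := by
      ext t
      simp only [subT, Set.mem_setOf_eq, Set.mem_inter_iff, Option.some.injEq]
      constructor
      · rintro ⟨u, rfl, h1, h2⟩; exact ⟨h1, h2⟩
      · rintro ⟨h1, h2⟩; exact ⟨t, rfl, h1, h2⟩
    rw [hseteq]
    have hA : mE μ {t : 𝕋 | r s t ∧ ¬ r t s} = 1 := by
      rw [hIdef] at hs; exact hs μ hμ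
    exact mE_inter (hC hμ) (hI1 μ hμ) hA
  | cons c σ ih =>
    have key : ∀ μ ∈ C, ∀ ν ∈ C, ∀ s ∈ I,
        mE (hmul μ ν) {t : 𝕋 | ∃ u, subT t (c :: σ) = some u ∧ u ∈ I ∧ (r s u ∧ ¬ r u s)} = 1 := by
      intro μ hμ ν hν s hs
      rw [mE, hmul_cons (hC hμ) (hC hν)]
      cases c
      · simpa using ih μ hμ s hs
      · simpa using ih ν hν s hs
    set D : Set (Bdd 𝕋 → ℝ) := {μ | μ ∈ C ∧ ∀ s ∈ I,
        mE μ {t : 𝕋 | ∃ u, subT t (c :: σ) = some u ∧ u ∈ I ∧ (r s u ∧ ¬ r u s)} = 1} with hDdef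
    have hsub : D ⊆ C := fun μ hμ => hμ.1
    have hne' : D.Nonempty := by
      obtain ⟨μ0, hμ0⟩ := hne
      exact ⟨hmul μ0 μ0, hcl μ0 hμ0 μ0 hμ0, fun s hs => key μ0 hμ0 μ0 hμ0 s hs⟩
    have hclosedD : IsClosed D := by
      have h2 : IsClosed {φ : Bdd 𝕋 → ℝ | ∀ s ∈ I,
          mE φ {t : 𝕋 | ∃ u, subT t (c :: σ) = some u ∧ u ∈ I ∧ (r s u ∧ ¬ r u s)} = 1} := by
        have heq : {φ : Bdd 𝕋 → ℝ | ∀ s ∈ I,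
            mE φ {t : 𝕋 | ∃ u, subT t (c :: σ) = some u ∧ u ∈ I ∧ (r s u ∧ ¬ r u s)} = 1} =
            ⋂ s ∈ I, {φ : Bdd 𝕋 → ℝ |
              φ (indB {t : 𝕋 | ∃ u, subT t (c :: σ) = some u ∧ u ∈ I ∧ (r s u ∧ ¬ r u s)}) = 1} := by
          ext φ; simp [mE]
        rw [heq]
        exact isClosed_biInter fun s _ => isClosed_eq (continuous_apply _) continuous_const
      exact hcomp.isClosed.inter h2
    have hcompD : IsCompact D := hcomp.of_isClosed_subset hclosedD hsub
    have hconvD : Convex ℝ D := by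
      intro x hx y hy a b ha hb hab
      refine ⟨hconv hx.1 hy.1 ha hb hab, fun s hs => ?_⟩
      have hx2 := hx.2 s hs
      have hy2 := hy.2 s hs
      rw [mE] at hx2 hy2 ⊢
      show (a • x + b • y) _ = 1
      simp only [Pi.add_apply, Pi.smul_apply, smul_eq_mul]
      rw [hx2, hy2]; linarith
    have hclD : HClosed D := fun μ hμ ν hν =>
      ⟨hcl μ hμ.1 ν hν.1, fun s hs => key μ hμ.1 ν hν.1 s hs⟩
    have hDC : D = C := hmin D hsub hne' hcompD hconvD hclD
    intro μ hμ s hs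
    have hμD : μ ∈ D := by rw [hDC]; exact hμ
    exact hμD.2 s hs
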